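/- Euler transformation: for |z| < 1, ₂F₁(a,b;c;z) = (1−z)^{c−a−b} ₂F₁(c−a, c−b; c; z). -/

import Mathlib

open Filter Finset
open scoped Topology

/-- Pochhammer symbol `(q)_n`. -/
noncomputable def poch (q : ℂ) : ℕ → ℂ
  | 0 => 1
  | n + 1 => poch q n * (q + n)

/-- The Gauss hypergeometric series `₂F₁(a,b;c;z)`. -/
noncomputable def hyp2F1 (a b c z : ℂ) : ℂ :=
  ∑' n : ℕ, poch a n * poch b n / (poch c n * n.factorial) * z ^ n

lemma poch_zero (q : ℂ) : poch q 0 = 1 := rfl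
lemma poch_succ (q : ℂ) (n : ℕ) : poch q (n+1) = poch q n * (q + n) := rfl

lemma poch_ne_zero {c : ℂ} (hc : ∀ n : ℕ, c + (n:ℂ) ≠ 0) (n : ℕ) : poch c n ≠ 0 := by
  induction n with
  | zero => simp [poch]
  | succ n ih => exact mul_ne_zero ih (hc n)

lemma norm_natCast_add_one (n : ℕ) : ‖((n:ℂ)+1)‖ = (n:ℝ)+1 := by
  rw [show ((n:ℂ)+1) = ((n+1:ℕ):ℂ) by push_cast; ring, Complex.norm_natCast]
  push_cast; ring

lemma tendsto_aux (x : ℂ) : Tendsto (fun n : ℕ => (x + n) / ((n : ℂ) + 1)) atTop (𝓝 1) := by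
  have h0 : Tendsto (fun n : ℕ => (x - 1) / ((n : ℂ) + 1)) atTop (𝓝 0) := by
    apply squeeze_zero_norm (a := fun n : ℕ => ‖x - 1‖ * (1 / ((n:ℝ) + 1)))
    · intro n
      rw [norm_div, norm_natCast_add_one, mul_one_div]
    · simpa using (tendsto_one_div_add_atTop_nhds_zero_nat).const_mul ‖x - 1‖
  have h1 := h0.const_add 1
  simp only [add_zero] at h1
  refine h1.congr (fun n => ?_)
  have hn : ((n:ℂ)+1) ≠ 0 := by
    intro h
    have := norm_natCast_add_one n
    rw [h, norm_zero] at this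
    nlinarith [Nat.cast_nonneg (α := ℝ) n]
  field_simp
  ring

lemma tendsto_aux2 (y c : ℂ) :
    Tendsto (fun n : ℕ => (y + n) / (c + n)) atTop (𝓝 1) := by
  have h := (tendsto_aux y).div (tendsto_aux c) one_ne_zero
  have h' : Tendsto (fun n : ℕ => ((y + n) / ((n:ℂ) + 1)) / ((c + n) / ((n:ℂ) + 1)))
      atTop (𝓝 1) := by rw [div_one] at h; exact h
  refine h'.congr (fun n => ?_)
  have hn : ((n:ℂ)+1) ≠ 0 := by
    intro h'
    have := norm_natCast_add_one n
    rw [h', norm_zero] at this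
    nlinarith [Nat.cast_nonneg (α := ℝ) n]
  field_simp

lemma summable_of_ratio_tendsto {α : Type*} [SeminormedAddCommGroup α] [CompleteSpace α]
    {f : ℕ → α} {ρ : ℕ → ℝ} {L : ℝ} (hL : L < 1)
    (hρ : Tendsto ρ atTop (𝓝 L)) (h : ∀ n, ‖f (n + 1)‖ ≤ ρ n * ‖f n‖) : Summable f := by
  refine summable_of_ratio_norm_eventually_le (r := (L + 1) / 2) (by linarith) ?_
  have hev : ∀ᶠ n in atTop, ρ n < (L + 1) / 2 :=
    hρ.eventually_lt_const (by linarith)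
  filter_upwards [hev] with n hn
  exact (h n).trans (mul_le_mul_of_nonneg_right hn.le (norm_nonneg _))

lemma hyp_ratio (x y c z : ℂ) (hc : ∀ n : ℕ, c + (n:ℂ) ≠ 0) (n : ℕ) :
    poch x (n+1) * poch y (n+1) / (poch c (n+1) * (n+1).factorial) * z ^ (n+1)
      = ((x + n) * (y + n) / ((c + n) * ((n:ℂ) + 1)) * z)
        * (poch x n * poch y n / (poch c n * n.factorial) * z ^ n) := by
  have h1 : ((n:ℂ)+1) ≠ 0 := by
    intro h'
    have := norm_natCast_add_one n
    rw [h', norm_zero] at this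
    nlinarith [Nat.cast_nonneg (α := ℝ) n]
  have h2 : ((n.factorial : ℂ)) ≠ 0 := Nat.cast_ne_zero.mpr n.factorial_ne_zero
  rw [poch_succ, poch_succ, poch_succ, Nat.factorial_succ]
  push_cast
  rw [pow_succ]
  field_simp

lemma summable_norm_hyp (x y c z : ℂ) (hc : ∀ n : ℕ, c + (n:ℂ) ≠ 0) (hz : ‖z‖ < 1) :
    Summable (fun n : ℕ => ‖poch x n * poch y n / (poch c n * n.factorial) * z ^ n‖) := by
  refine summable_of_ratio_tendsto (L := ‖z‖)
    (ρ := fun n => ‖(x + n) * (y + n) / ((c + n) * ((n:ℂ) + 1)) * z‖) hz ?_ ?_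
  · have hq : Tendsto (fun n : ℕ => (x + n) * (y + n) / ((c + n) * ((n:ℂ) + 1)) * z)
        atTop (𝓝 z) := by
      have := ((tendsto_aux2 x c).mul (tendsto_aux y)).mul_const z
      simp only [one_mul] at this
      refine this.congr (fun n => ?_)
      rw [div_mul_div_comm]
    simpa using hq.norm
  · intro n
    rw [Real.norm_of_nonneg (norm_nonneg _), Real.norm_of_nonneg (norm_nonneg _),
      ← norm_mul, hyp_ratio x y c z hc n]

lemma nc1 (n : ℕ) : ((n:ℂ) + 1) ≠ 0 := by
  exact Nat.cast_add_one_ne_zero n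

lemma binom_ratio (w z : ℂ) (n : ℕ) :
    poch w (n+1) / ((n+1).factorial : ℂ) * z ^ (n+1)
      = ((w + n) / ((n:ℂ) + 1) * z) * (poch w n / (n.factorial : ℂ) * z ^ n) := by
  have h1 := nc1 n
  have h2 : ((n.factorial : ℂ)) ≠ 0 := Nat.cast_ne_zero.mpr n.factorial_ne_zero
  rw [poch_succ, Nat.factorial_succ]
  push_cast
  rw [pow_succ]
  field_simp

lemma summable_norm_binom (w z : ℂ) (hz : ‖z‖ < 1) :
    Summable (fun n : ℕ => ‖poch w n / (n.factorial : ℂ) * z ^ n‖) := by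
  refine summable_of_ratio_tendsto (L := ‖z‖)
    (ρ := fun n => ‖(w + n) / ((n:ℂ) + 1) * z‖) hz ?_ ?_
  · have hq : Tendsto (fun n : ℕ => (w + n) / ((n:ℂ) + 1) * z) atTop (𝓝 z) := by
      simpa using (tendsto_aux w).mul_const z
    simpa using hq.norm
  · intro n
    rw [Real.norm_of_nonneg (norm_nonneg _), Real.norm_of_nonneg (norm_nonneg _),
      ← norm_mul, binom_ratio w z n]

lemma summable_deriv_bound (w : ℂ) {r : ℝ} (hr0 : 0 < r) (hr : r < 1) :
    Summable (fun n : ℕ => ‖poch w n / (n.factorial : ℂ)‖ * (n * r ^ (n-1))) := by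
  rw [← summable_nat_add_iff 1]
  refine summable_of_ratio_tendsto (L := r) hr
    (ρ := fun n => ‖(w + 1 + (n:ℂ)) / ((n:ℂ) + 1)‖ * r) ?_ ?_
  · simpa using ((tendsto_aux (w+1)).norm).mul_const r
  · intro n
    have hp := binom_ratio w 1 (n+1)
    simp only [one_pow, mul_one] at hp
    have hcast : w + ((n+1:ℕ):ℂ) = w + 1 + n := by push_cast; ring
    have h1 : ((n:ℝ) + 1) ≠ 0 := by positivity
    have h2 : ((n:ℝ) + 2) ≠ 0 := by positivity
    have key : ((n:ℝ)+2) * ‖poch w (n+2) / ((n+2).factorial : ℂ)‖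
        = ‖w + 1 + (n:ℂ)‖ * ‖poch w (n+1) / ((n+1).factorial : ℂ)‖ := by
      rw [show n+2 = (n+1)+1 from rfl, hp, hcast, norm_mul, norm_div,
        show ‖((n+1:ℕ):ℂ) + 1‖ = (n:ℝ)+2 by rw [norm_natCast_add_one]; push_cast; ring]
      field_simp
    beta_reduce
    rw [Real.norm_of_nonneg (by positivity), Real.norm_of_nonneg (by positivity),
      show ‖(w + 1 + (n:ℂ)) / ((n:ℂ) + 1)‖ = ‖w + 1 + (n:ℂ)‖ / ((n:ℝ) + 1) by
        rw [norm_div, norm_natCast_add_one]]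
    simp only [Nat.add_sub_cancel]
    apply le_of_eq
    rw [show n+1+1 = n+2 from rfl]
    generalize hE2 : ‖poch w (n+2) / (((n+2).factorial : ℕ) : ℂ)‖ = E2 at key ⊢
    generalize hE1 : ‖poch w (n+1) / (((n+1).factorial : ℕ) : ℂ)‖ = E1 at key ⊢
    generalize hA : ‖w + 1 + (n:ℂ)‖ = A at key ⊢
    push_cast
    field_simp
    linear_combination (r ^ n * r) * key

noncomputable def hypTerm (x y c : ℂ) (k : ℕ) : ℂ :=
  poch x k * poch y k / (poch c k * (k.factorial : ℂ))

noncomputable def binTerm (w : ℂ) (j : ℕ) : ℂ := poch w j / (j.factorial : ℂ)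

noncomputable def Tt (a b c : ℂ) (n k : ℕ) : ℂ :=
  (k:ℂ) * (c + k - 1) * hypTerm (c-a) (c-b) c k * binTerm (a+b-c) (n+1-k)

lemma hyp_step (x y c : ℂ) (hc : ∀ n : ℕ, c + (n:ℂ) ≠ 0) (k : ℕ) :
    hypTerm x y c (k+1) = ((x+k)*(y+k)/((c+k)*((k:ℂ)+1))) * hypTerm x y c k := by
  have := hyp_ratio x y c 1 hc k
  simpa [hypTerm] using this

lemma bin_step (w : ℂ) (j : ℕ) :
    binTerm w (j+1) = ((w+j)/((j:ℂ)+1)) * binTerm w j := by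
  have := binom_ratio w 1 j
  simpa [binTerm] using this

lemma claim1 (a b c : ℂ) (hc : ∀ n : ℕ, c + (n:ℂ) ≠ 0) (k m : ℕ) :
    (((k+m:ℕ):ℂ) + 1) * (c + ((k+m:ℕ):ℂ))
        * (hypTerm (c-a) (c-b) c k * binTerm (a+b-c) (m+1))
      - ((a + ((k+m:ℕ):ℂ)) * (b + ((k+m:ℕ):ℂ)))
        * (hypTerm (c-a) (c-b) c k * binTerm (a+b-c) m)
    = Tt a b c (k+m) k - Tt a b c (k+m) (k+1) := by
  have e1 : k + m + 1 - k = m + 1 := by omega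
  have e2 : k + m + 1 - (k+1) = m := by omega
  simp only [Tt, e1, e2]
  rw [hyp_step (c-a) (c-b) c hc k, bin_step (a+b-c) m]
  have h1 := nc1 k
  have h2 := nc1 m
  have hcck : c + (k:ℂ) ≠ 0 := hc k
  have hsc : (((k+m:ℕ):ℂ)+1) * (c+((k+m:ℕ):ℂ)) * ((a+b-c+(m:ℂ))/((m:ℂ)+1))
        - (a+((k+m:ℕ):ℂ)) * (b+((k+m:ℕ):ℂ))
      = (k:ℂ)*(c+(k:ℂ)-1) * ((a+b-c+(m:ℂ))/((m:ℂ)+1))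
        - ((k+1:ℕ):ℂ)*(c+((k+1:ℕ):ℂ)-1)
          * ((c-a+(k:ℂ))*(c-b+(k:ℂ))/((c+(k:ℂ))*((k:ℂ)+1))) := by
    push_cast
    field_simp
    ring
  linear_combination (hypTerm (c-a) (c-b) c k * binTerm (a+b-c) m) * hsc
lemma saalschutz (a b c : ℂ) (hc : ∀ n : ℕ, c + (n:ℂ) ≠ 0) (n : ℕ) :
    ∑ k ∈ Finset.range (n+1),
        hypTerm (c-a) (c-b) c k * binTerm (a+b-c) (n-k) = hypTerm a b c n := by
  induction n with
  | zero => simp [hypTerm, binTerm, poch]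
  | succ n ih =>
    have step : ∀ k ∈ Finset.range (n+1),
        (((n:ℕ):ℂ)+1) * (c + n) * (hypTerm (c-a) (c-b) c k * binTerm (a+b-c) (n+1-k))
          - ((a+n)*(b+n)) * (hypTerm (c-a) (c-b) c k * binTerm (a+b-c) (n-k))
        = Tt a b c n k - Tt a b c n (k+1) := by
      intro k hk
      rw [Finset.mem_range, Nat.lt_succ_iff] at hk
      obtain ⟨m, rfl⟩ : ∃ m, n = k + m := ⟨n - k, by omega⟩
      have e1 : k + m + 1 - k = m + 1 := by omega
      have e2 : k + m - k = m := by omega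
      rw [e1, e2]
      exact claim1 a b c hc k m
    have hsum : ∑ k ∈ Finset.range (n+1),
        ((((n:ℕ):ℂ)+1) * (c + n) * (hypTerm (c-a) (c-b) c k * binTerm (a+b-c) (n+1-k))
          - ((a+n)*(b+n)) * (hypTerm (c-a) (c-b) c k * binTerm (a+b-c) (n-k)))
        = Tt a b c n 0 - Tt a b c n (n+1) := by
      rw [Finset.sum_congr rfl step]
      exact Finset.sum_range_sub' (Tt a b c n) (n+1)
    have expand : (∑ k ∈ Finset.range (n+1),
          (((n:ℕ):ℂ)+1) * (c + n) * (hypTerm (c-a) (c-b) c k * binTerm (a+b-c) (n+1-k)))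
        - (∑ k ∈ Finset.range (n+1),
          ((a+n)*(b+n)) * (hypTerm (c-a) (c-b) c k * binTerm (a+b-c) (n-k)))
        = Tt a b c n 0 - Tt a b c n (n+1) := by
      rw [← Finset.sum_sub_distrib]
      exact hsum
    have hT0 : Tt a b c n 0 = 0 := by simp [Tt]
    have hTn : Tt a b c n (n+1)
        = (((n:ℕ):ℂ)+1) * (c + n) * (hypTerm (c-a) (c-b) c (n+1) * binTerm (a+b-c) 0) := by
      simp only [Tt, Nat.add_sub_cancel_left, Nat.sub_self]
      push_cast
      ring
    have hrec : (((n:ℕ):ℂ) + 1) * (c + n)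
          * (∑ k ∈ Finset.range (n+2), hypTerm (c-a) (c-b) c k * binTerm (a+b-c) (n+1-k))
        = ((a + n) * (b + n))
          * (∑ k ∈ Finset.range (n+1), hypTerm (c-a) (c-b) c k * binTerm (a+b-c) (n-k)) := by
      rw [show n+2 = (n+1)+1 from rfl, Finset.sum_range_succ, mul_add,
        Finset.mul_sum, Finset.mul_sum, Nat.sub_self]
      linear_combination expand - hTn + hT0
    have hne : (((n:ℕ):ℂ)+1) * (c + n) ≠ 0 := mul_ne_zero (nc1 n) (hc n)
    refine mul_left_cancel₀ hne ?_
    rw [show (n+1+1) = n+2 from rfl] at *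
    rw [hrec, ih, hyp_step a b c hc n]
    have h1 := nc1 n
    have hccn : c + (n:ℂ) ≠ 0 := hc n
    have hsc2 : (((n:ℕ):ℂ)+1) * (c+(n:ℂ)) * ((a+(n:ℂ))*(b+(n:ℂ))/((c+(n:ℂ))*((n:ℂ)+1)))
        = (a+(n:ℂ))*(b+(n:ℂ)) := by
      field_simp
    linear_combination (-(hypTerm a b c n)) * hsc2

lemma binom_deriv (w : ℂ) {z : ℂ} (hz : ‖z‖ < 1) :
    HasDerivAt (fun y : ℂ => ∑' n : ℕ, poch w n / (n.factorial : ℂ) * y ^ n)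
      (∑' n : ℕ, poch w n / (n.factorial : ℂ) * ((n:ℂ) * z ^ (n-1))) z := by
  set r : ℝ := (‖z‖ + 1) / 2 with hr
  have hr0 : 0 < r := by positivity
  have hr1 : r < 1 := by rw [hr]; linarith
  have hzr : ‖z‖ < r := by rw [hr]; linarith
  refine hasDerivAt_tsum_of_isPreconnected (summable_deriv_bound w hr0 hr1)
    (Metric.isOpen_ball (x := (0:ℂ)) (ε := r)) (convex_ball (0:ℂ) r).isPreconnected
    (fun n y _ => (hasDerivAt_pow n y).const_mul (poch w n / (n.factorial : ℂ)))
    (fun n y hy => ?_) (Metric.mem_ball_self hr0) ?_ (mem_ball_zero_iff.mpr hzr)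
  · rw [mem_ball_zero_iff] at hy
    rw [norm_mul, norm_mul, Complex.norm_natCast, norm_pow]
    gcongr
  · refine summable_of_ne_finset_zero (s := {0}) (fun n hn => ?_)
    simp only [Finset.mem_singleton] at hn
    simp [zero_pow hn]

lemma binom_ode (w : ℂ) {z : ℂ} (hz : ‖z‖ < 1) :
    (1 - z) * (∑' n : ℕ, poch w n / (n.factorial : ℂ) * ((n:ℂ) * z ^ (n-1)))
      = w * ∑' n : ℕ, poch w n / (n.factorial : ℂ) * z ^ n := by
  set r : ℝ := (‖z‖ + 1) / 2 with hr
  have hr0 : 0 < r := by positivity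
  have hr1 : r < 1 := by rw [hr]; linarith
  have hzr : ‖z‖ ≤ r := by rw [hr]; linarith
  set t : ℕ → ℂ := fun n => poch w n / (n.factorial : ℂ) * z ^ n with ht
  set d : ℕ → ℂ := fun n => poch w n / (n.factorial : ℂ) * ((n:ℂ) * z ^ (n-1)) with hd
  have hsumt : Summable t := (summable_norm_binom w z hz).of_norm
  have hsumd : Summable d := by
    refine Summable.of_norm_bounded (summable_deriv_bound w hr0 hr1) (fun n => ?_)
    simp only [hd]
    rw [norm_mul, norm_mul, Complex.norm_natCast, norm_pow]
    gcongr
  have hd1 : ∀ n : ℕ, d (n+1) = (w + n) * t n := by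
    intro n
    have hp := binom_ratio w 1 n
    simp only [one_pow, mul_one] at hp
    rw [hd, ht]
    simp only [Nat.add_sub_cancel, hp]
    have h1 := nc1 n
    have h2 : ((n.factorial:ℕ):ℂ) ≠ 0 := Nat.cast_ne_zero.mpr n.factorial_ne_zero
    push_cast
    field_simp
  have hzd : ∀ n : ℕ, z * d n = (n:ℂ) * t n := by
    intro n
    rw [hd, ht]
    cases n with
    | zero => simp
    | succ m =>
      simp only [Nat.add_sub_cancel]
      push_cast
      rw [pow_succ]
      ring
  have hshift : ∑' n, d n = ∑' n, d (n+1) := by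
    rw [Summable.tsum_eq_zero_add hsumd]
    simp [hd]
  have hsum1 : Summable (fun n : ℕ => (w + n) * t n) :=
    (((summable_nat_add_iff 1).mpr hsumd)).congr hd1
  have hsum2 : Summable (fun n : ℕ => (n:ℂ) * t n) :=
    (hsumd.mul_left z).congr hzd
  calc (1 - z) * (∑' n, d n) = (∑' n, d (n+1)) - z * (∑' n, d n) := by
        rw [← hshift]; ring
    _ = (∑' n : ℕ, (w + n) * t n) - (∑' n : ℕ, (n:ℂ) * t n) := by
        rw [tsum_congr hd1, ← tsum_mul_left, tsum_congr hzd]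
    _ = ∑' n : ℕ, ((w + n) * t n - (n:ℂ) * t n) := (Summable.tsum_sub hsum1 hsum2).symm
    _ = ∑' n : ℕ, w * t n := by
        refine tsum_congr (fun n => ?_)
        ring
    _ = w * ∑' n, t n := tsum_mul_left

lemma one_sub_ne {z : ℂ} (hz : ‖z‖ < 1) : (1:ℂ) - z ≠ 0 := by
  intro h
  have h1 : (1:ℂ) = z := by linear_combination h
  rw [← h1] at hz
  simp at hz

lemma binom_tsum (w : ℂ) {z : ℂ} (hz : ‖z‖ < 1) :
    ∑' n : ℕ, poch w n / (n.factorial : ℂ) * z ^ n = (1 - z) ^ (-w) := by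
  set F : ℂ → ℂ := fun y => (∑' n : ℕ, poch w n / (n.factorial : ℂ) * y ^ n) * (1 - y) ^ w
    with hF
  have key : ∀ y ∈ Metric.ball (0:ℂ) 1, HasDerivAt F 0 y := by
    intro y hy
    rw [mem_ball_zero_iff] at hy
    have h1y : (1 : ℂ) - y ≠ 0 := one_sub_ne hy
    have hslit : (1 - y) ∈ Complex.slitPlane := by
      refine Or.inl ?_
      have hre : y.re ≤ ‖y‖ := by
        exact Complex.re_le_norm y
      simp only [Complex.sub_re, Complex.one_re]
      linarith
    have hf := binom_deriv w hy
    have hg : HasDerivAt (fun x : ℂ => (1 - x) ^ w) (w * (1 - y) ^ (w - 1) * (-1)) y :=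
      HasDerivAt.cpow_const ((hasDerivAt_id y).const_sub 1) hslit
    have hode := binom_ode w hy
    have hFd := hf.mul hg
    have hpow : (1 - y) ^ w = (1 - y) ^ (w - 1) * (1 - y) := by
      have h := Complex.cpow_add (w-1) 1 h1y
      rw [Complex.cpow_one] at h
      rw [show w - 1 + 1 = w by ring] at h
      exact h
    have hzero : (∑' n : ℕ, poch w n / (n.factorial : ℂ) * ((n:ℂ) * y ^ (n-1))) * (1 - y) ^ w
        + (∑' n : ℕ, poch w n / (n.factorial : ℂ) * y ^ n) * (w * (1 - y) ^ (w - 1) * (-1))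
        = 0 := by
      rw [hpow]
      linear_combination (1 - y) ^ (w - 1) * hode
    exact hzero ▸ hFd
  have hdiff : DifferentiableOn ℂ F (Metric.ball (0:ℂ) 1) :=
    fun y hy => ((key y hy).differentiableAt).differentiableWithinAt
  have hfz : ∀ x ∈ Metric.ball (0:ℂ) 1, fderivWithin ℂ F (Metric.ball (0:ℂ) 1) x = 0 := by
    intro x hx
    rw [fderivWithin_of_isOpen Metric.isOpen_ball hx]
    have h := (key x hx).hasFDerivAt
    have e : (ContinuousLinearMap.toSpanSingleton ℂ (0:ℂ)) = 0 := by
      ext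
      simp
    rw [e] at h
    exact h.fderiv
  have hzb : z ∈ Metric.ball (0:ℂ) 1 := mem_ball_zero_iff.mpr hz
  have hc01 : (0:ℂ) ∈ Metric.ball (0:ℂ) 1 := Metric.mem_ball_self one_pos
  have hval := (convex_ball (0:ℂ) 1).is_const_of_fderivWithin_eq_zero hdiff hfz hzb hc01
  have hF0 : F 0 = 1 := by
    rw [hF]
    simp only []
    rw [tsum_eq_single 0 (fun n hn => by simp [zero_pow hn])]
    simp [poch, Complex.one_cpow]
  rw [hF0] at hval
  have h1z : (1:ℂ) - z ≠ 0 := one_sub_ne hz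
  have hY : (1 - z) ^ w ≠ 0 := by
    simp [Complex.cpow_eq_zero_iff, h1z]
  rw [Complex.cpow_neg, inv_eq_one_div, eq_div_iff hY]
  exact hval

/-- Euler transformation: `₂F₁(a,b;c;z) = (1−z)^{c−a−b} ₂F₁(c−a,c−b;c;z)` for `|z| < 1`. -/
theorem stmt8 (a b c z : ℂ) (hc : ∀ n : ℕ, c ≠ -(n : ℂ)) (hz : ‖z‖ < 1) :
    hyp2F1 a b c z = (1 - z) ^ (c - a - b) * hyp2F1 (c - a) (c - b) c z := by
  have hc' : ∀ n : ℕ, c + (n:ℂ) ≠ 0 := fun n h => hc n (eq_neg_of_add_eq_zero_left h)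
  have hf := summable_norm_hyp (c-a) (c-b) c z hc' hz
  have hg := summable_norm_binom (a+b-c) z hz
  have hcauchy := tsum_mul_tsum_eq_tsum_sum_range_of_summable_norm hf hg
  have hw : ((1:ℂ) - z) ^ (c - a - b)
      = ∑' n : ℕ, poch (a+b-c) n / (n.factorial : ℂ) * z ^ n := by
    rw [show c - a - b = -(a+b-c) by ring]
    exact (binom_tsum (a+b-c) hz).symm
  rw [mul_comm]
  simp only [hyp2F1]
  rw [hw, hcauchy]
  refine tsum_congr (fun n => ?_)
  have hstep : ∀ k ∈ Finset.range (n+1),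
      (poch (c-a) k * poch (c-b) k / (poch c k * (k.factorial:ℂ)) * z ^ k)
        * (poch (a+b-c) (n-k) / ((n-k).factorial : ℂ) * z ^ (n-k))
      = (hypTerm (c-a) (c-b) c k * binTerm (a+b-c) (n-k)) * z ^ n := by
    intro k hk
    rw [Finset.mem_range, Nat.lt_succ_iff] at hk
    have hzz : z ^ k * z ^ (n-k) = z ^ n := by
      rw [← pow_add]
      congr 1
      omega
    simp only [hypTerm, binTerm]
    linear_combination (poch (c-a) k * poch (c-b) k / (poch c k * (k.factorial:ℂ))
      * (poch (a+b-c) (n-k) / ((n-k).factorial : ℂ))) * hzz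
  rw [Finset.sum_congr rfl hstep, ← Finset.sum_mul, saalschutz a b c hc' n]
  simp only [hypTerm]
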